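/- Let $g(n) = V_n / V_{n-1}$ and $h(n) = 16(n^3 - n^2 + 1)/(n^3 - n^2)$ for $n \geq 2$. If for some integer $n \geq 4$ we have $g(n) > h(n)$, then $g(n+1) > h(n+1)$; moreover $g(3) = h(3) = 152/9$ and $g(4) = 625/38 > 49/3 = h(4)$. -/

import Mathlib

/-- Induction step and base cases for `g(n) = V_n/V_{n-1}` versus
`h(n) = 16(n³-n²+1)/(n³-n²)`: for `n ≥ 4`, `g(n) > h(n)` implies `g(n+1) > h(n+1)`;
moreover `g(3) = h(3) = 152/9` and `g(4) = 625/38 > 49/3 = h(4)`. -/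
theorem stmt_12 (V : ℕ → ℚ) (hV0 : V 0 = 1) (hV1 : V 1 = 8)
    (hrec : ∀ n : ℕ, 1 ≤ n →
      (n : ℚ) * (n + 1) ^ 2 * V (n + 1) =
        8 * n * (3 * n ^ 2 + 5 * n + 1) * V n
          - 128 * ((n : ℚ) - 1) * (n + 1) ^ 2 * V (n - 1)) :
    (∀ n : ℕ, 4 ≤ n →
      V n / V (n - 1) > 16 * ((n : ℚ) ^ 3 - (n : ℚ) ^ 2 + 1) / ((n : ℚ) ^ 3 - (n : ℚ) ^ 2) →
      V (n + 1) / V n >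
        16 * (((n : ℚ) + 1) ^ 3 - ((n : ℚ) + 1) ^ 2 + 1) / (((n : ℚ) + 1) ^ 3 - ((n : ℚ) + 1) ^ 2)) ∧
    V 3 / V 2 = 152 / 9 ∧
    16 * ((3 : ℚ) ^ 3 - (3 : ℚ) ^ 2 + 1) / ((3 : ℚ) ^ 3 - (3 : ℚ) ^ 2) = 152 / 9 ∧
    V 4 / V 3 = 625 / 38 ∧
    16 * ((4 : ℚ) ^ 3 - (4 : ℚ) ^ 2 + 1) / ((4 : ℚ) ^ 3 - (4 : ℚ) ^ 2) = 49 / 3 ∧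
    (625 : ℚ) / 38 > 49 / 3 := by
  -- positivity and growth of V
  have hpos : ∀ n : ℕ, 0 < V n ∧ 8 * V n ≤ V (n + 1) := by
    intro n
    induction n with
    | zero => constructor <;> simp [hV0, hV1]
    | succ m ih =>
      obtain ⟨h0, h1⟩ := ih
      have hb : 0 < V (m + 1) := by linarith
      refine ⟨hb, ?_⟩
      have hr := hrec (m + 1) (by omega)
      push_cast at hr
      try simp only [Nat.add_sub_cancel] at hr
      set x := (m : ℚ) with hxdef
      have hx0 : (0 : ℚ) ≤ x := Nat.cast_nonneg m
      have key : (x+1)*(x+2)^2 * V (m+2) - 8*(x+1)*(x+2)^2 * V (m+1)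
          = 8*(x+1)*(2*x^2+7*x+5)*(V (m+1) - 8 * V m) + 64*(x^2+4*x+5)*V m := by
        linear_combination hr
      have h2 : 0 ≤ 8*(x+1)*(2*x^2+7*x+5)*(V (m+1) - 8 * V m) + 64*(x^2+4*x+5)*V m := by
        have t1 : 0 ≤ 8*(x+1)*(2*x^2+7*x+5) := by nlinarith
        have t2 : 0 ≤ V (m+1) - 8 * V m := by linarith
        nlinarith [mul_nonneg t1 t2]
      have h3 : (0:ℚ) < (x+1)*(x+2)^2 := by nlinarith
      nlinarith [key, h2, h3]
  refine ⟨?_, ?_, by norm_num, ?_, by norm_num, by norm_num⟩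
  · intro n hn hgt
    have hx : (4:ℚ) ≤ (n:ℚ) := by exact_mod_cast hn
    set x := (n : ℚ) with hxdef
    have ha : 0 < V (n - 1) := (hpos (n - 1)).1
    have hb : 0 < V n := (hpos n).1
    have hd1 : (0:ℚ) < x^3 - x^2 := by nlinarith
    have hd2 : (0:ℚ) < (x+1)^3 - (x+1)^2 := by nlinarith
    rw [gt_iff_lt, div_lt_div_iff₀ hd1 ha] at hgt
    rw [gt_iff_lt, div_lt_div_iff₀ hd2 hb]
    have hr := hrec n (by omega)
    have h5 : (x^3+x^2-x-2) * (16*(x^3-x^2+1) * V (n-1))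
        < (x^3+x^2-x-2) * (V n * (x^3-x^2)) := by
      apply mul_lt_mul_of_pos_left hgt
      nlinarith
    have h6 : 0 < (2*x^2-x-2) * V (n-1) := mul_pos (by nlinarith) ha
    have hgoal : 16*((x+1)^3-(x+1)^2+1) * V n * (x^2*(x-1))
        < (V (n+1) * ((x+1)^3-(x+1)^2)) * (x^2*(x-1)) := by
      have heq : (V (n+1) * ((x+1)^3-(x+1)^2)) * (x^2*(x-1))
          = (8*x*(3*x^2+5*x+1)*V n - 128*(x-1)*(x+1)^2*V (n-1)) * (x^2*(x-1)) := by
        linear_combination (x^2*(x-1)) * hr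
      rw [heq]
      nlinarith [h5, h6]
    have hxp : (0:ℚ) < x^2*(x-1) := by nlinarith
    exact (mul_lt_mul_iff_of_pos_right hxp).mp hgoal
  · have e1 := hrec 1 (by norm_num)
    have e2 := hrec 2 (by norm_num)
    norm_num [hV0, hV1] at e1
    norm_num at e2
    have hV2 : V 2 = 144 := by linarith
    have hV3 : V 3 = 2432 := by rw [hV2, hV1] at e2; linarith
    rw [hV3, hV2]; norm_num
  · have e1 := hrec 1 (by norm_num)
    have e2 := hrec 2 (by norm_num)
    have e3 := hrec 3 (by norm_num)
    norm_num [hV0, hV1] at e1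
    norm_num at e2 e3
    have hV2 : V 2 = 144 := by linarith
    have hV3 : V 3 = 2432 := by rw [hV2, hV1] at e2; linarith
    have hV4 : V 4 = 40000 := by rw [hV2, hV3] at e3; linarith
    rw [hV4, hV3]; norm_num
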